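/- Let M_0, …, M_{n-1} be positive bounded kernels on X. Suppose c_0 ∈ [0,1] and a probability measure ν_0 satisfy δ_x M_0(f) ≥ c_0 ‖δ_x M_0‖_TV ν_0(f) for all x and f ≥ 0, and d_1 ∈ [0,1] satisfies ν_0(m_{1,n}) ≥ d_1 sup_x m_{1,n}(x). Then for every finite positive measure μ and every n ≥ 1: c_0 d_1 · ‖μM_0‖_TV · sup_x m_{1,n}(x) ≤ ‖μ M_{0,n}‖_TV ≤ ‖μ M_0‖_TV · sup_x m_{1,n}(x). -/

import Mathlib

open MeasureTheory ProbabilityTheory ENNReal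

variable {X : Type*} [MeasurableSpace X]

/-- `seqApply M k j μ = μ M_k M_{k+1} ⋯ M_{k+j-1}`. -/
noncomputable def seqApply (M : ℕ → Kernel X X) (k : ℕ) : ℕ → Measure X → Measure X
  | 0, μ => μ
  | j + 1, μ => (seqApply M k j μ).bind (fun x => M (k + j) x)

/-- Kernel form of `seqApply`. -/
noncomputable def Kseq (M : ℕ → Kernel X X) (k : ℕ) : ℕ → Kernel X X
  | 0 => Kernel.id
  | j + 1 => (M (k + j)) ∘ₖ (Kseq M k j)

lemma seqApply_eq_bind (M : ℕ → Kernel X X) (k j : ℕ) (μ : Measure X) :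
    seqApply M k j μ = μ.bind (Kseq M k j) := by
  induction j generalizing μ with
  | zero =>
      simp only [seqApply, Kseq]
      have : ⇑(Kernel.id : Kernel X X) = Measure.dirac := by
        funext a; exact Kernel.id_apply a
      rw [this, Measure.bind_dirac]
  | succ j ih =>
      show (seqApply M k j μ).bind (fun x => M (k + j) x) = μ.bind (Kseq M k (j + 1))
      rw [ih, Measure.bind_bind (Kseq M k j).measurable.aemeasurable (M (k + j)).measurable.aemeasurable]
      congr 1

lemma seqApply_dirac (M : ℕ → Kernel X X) (k j : ℕ) (x : X) :
    seqApply M k j (Measure.dirac x) = Kseq M k j x := by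
  rw [seqApply_eq_bind, Measure.dirac_bind (Kseq M k j).measurable]

lemma Kseq_shift (M : ℕ → Kernel X X) (hfin : ∀ i, IsFiniteKernel (M i)) (j : ℕ) :
    Kseq M 0 (j + 1) = (Kseq M 1 j) ∘ₖ (M 0) := by
  induction j with
  | zero => simp [Kseq, Kernel.comp_id, Kernel.id_comp]
  | succ j ih =>
      haveI := hfin (j + 1)
      show (M (0 + (j+1))) ∘ₖ Kseq M 0 (j+1) = (M (1 + j)) ∘ₖ Kseq M 1 j ∘ₖ M 0
      rw [ih, Nat.zero_add, Nat.add_comm 1 j, Kernel.comp_assoc]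

theorem mass_sandwich
    (M : ℕ → Kernel X X) (hfin : ∀ i, IsFiniteKernel (M i))
    (c₀ : ℝ≥0∞) (hc₀ : c₀ ≤ 1)
    (ν₀ : Measure X) [IsProbabilityMeasure ν₀]
    (hmin : ∀ x (f : X → ℝ≥0∞), Measurable f →
      c₀ * ((M 0 x) Set.univ) * ∫⁻ y, f y ∂ν₀ ≤ ∫⁻ y, f y ∂(M 0 x))
    (d₁ : ℝ≥0∞) (hd₁ : d₁ ≤ 1)
    (hmaj : ∀ j,
      d₁ * (⨆ x : X, (seqApply M 1 j (Measure.dirac x)) Set.univ)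
        ≤ ∫⁻ x, (seqApply M 1 j (Measure.dirac x)) Set.univ ∂ν₀) :
    ∀ (μ : Measure X), IsFiniteMeasure μ → ∀ n : ℕ, 1 ≤ n →
      c₀ * d₁ * ((seqApply M 0 1 μ) Set.univ)
          * (⨆ x : X, (seqApply M 1 (n - 1) (Measure.dirac x)) Set.univ)
        ≤ (seqApply M 0 n μ) Set.univ
      ∧ (seqApply M 0 n μ) Set.univ
        ≤ ((seqApply M 0 1 μ) Set.univ)
            * (⨆ x : X, (seqApply M 1 (n - 1) (Measure.dirac x)) Set.univ) := by
  intro μ hμ n hn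
  obtain ⟨m, rfl⟩ : ∃ m, n = m + 1 := ⟨n - 1, (Nat.succ_pred_eq_of_pos hn).symm⟩
  have hm : m + 1 - 1 = m := rfl
  rw [hm]
  set κ := Kseq M 1 m with hκ
  -- g x = mass of m_{1,m}(x)
  set g : X → ℝ≥0∞ := fun x => (κ x) Set.univ with hg
  have hgmeas : Measurable g := Kernel.measurable_coe κ MeasurableSet.univ
  have hgsup : ∀ x, g x ≤ ⨆ y, g y := fun x => le_iSup g x
  have hsup_eq : (⨆ x : X, (seqApply M 1 m (Measure.dirac x)) Set.univ) = ⨆ x, g x := by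
    congr 1; funext x; rw [seqApply_dirac]
  -- mass of seqApply M 0 (m+1) μ
  have hmass : (seqApply M 0 (m + 1) μ) Set.univ
      = ∫⁻ x, g x ∂(seqApply M 0 1 μ) := by
    rw [seqApply_eq_bind, Kseq_shift M hfin, seqApply_eq_bind]
    have h1 : ⇑(Kseq M 0 1) = fun x => (M 0) x := by
      funext x
      show (M (0+0) ∘ₖ Kernel.id) x = _
      rw [Kernel.comp_id]
    rw [h1]
    have h2 : (μ.bind (κ ∘ₖ M 0)) Set.univ
        = ∫⁻ x, ((κ ∘ₖ M 0) x) Set.univ ∂μ :=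
      Measure.bind_apply MeasurableSet.univ (κ ∘ₖ M 0).measurable.aemeasurable
    rw [h2, Measure.lintegral_bind (M 0).measurable.aemeasurable hgmeas.aemeasurable]
    congr 1; funext x
    rw [Kernel.comp_apply, Measure.bind_apply MeasurableSet.univ κ.measurable.aemeasurable]
  have hν₁ : (seqApply M 0 1 μ) Set.univ = ∫⁻ x, (M 0 x) Set.univ ∂μ := by
    rw [seqApply_eq_bind]
    have h1 : ⇑(Kseq M 0 1) = fun x => (M 0) x := by
      funext x
      show (M (0+0) ∘ₖ Kernel.id) x = _
      rw [Kernel.comp_id]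
    rw [h1]
    exact Measure.bind_apply MeasurableSet.univ (M 0).measurable.aemeasurable
  rw [hmass, hsup_eq]
  constructor
  · -- lower bound
    have hmaj' : d₁ * (⨆ x, g x) ≤ ∫⁻ y, g y ∂ν₀ := by
      have := hmaj m
      rw [hsup_eq] at this
      calc d₁ * ⨆ x, g x ≤ ∫⁻ x, (seqApply M 1 m (Measure.dirac x)) Set.univ ∂ν₀ := this
        _ = ∫⁻ y, g y ∂ν₀ := by
            congr 1; funext x; rw [seqApply_dirac]
    have key : ∀ x, c₀ * d₁ * (M 0 x) Set.univ * (⨆ y, g y) ≤ ∫⁻ y, g y ∂(M 0 x) := by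
      intro x
      calc c₀ * d₁ * (M 0 x) Set.univ * (⨆ y, g y)
          = c₀ * (M 0 x) Set.univ * (d₁ * ⨆ y, g y) := by ring
        _ ≤ c₀ * (M 0 x) Set.univ * ∫⁻ y, g y ∂ν₀ :=
            mul_le_mul_right hmaj' _
        _ ≤ ∫⁻ y, g y ∂(M 0 x) := hmin x g hgmeas
    have hbind : seqApply M 0 1 μ = μ.bind (fun x => (M 0) x) := rfl
    set C := c₀ * d₁ * ⨆ y, g y with hC
    have key' : ∀ x, C * (M 0 x) Set.univ ≤ ∫⁻ y, g y ∂(M 0 x) := by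
      intro x
      calc C * (M 0 x) Set.univ = c₀ * d₁ * (M 0 x) Set.univ * (⨆ y, g y) := by
            rw [hC]; ring
        _ ≤ _ := key x
    calc c₀ * d₁ * (seqApply M 0 1 μ) Set.univ * ⨆ x, g x
        = C * ∫⁻ x, (M 0 x) Set.univ ∂μ := by rw [hν₁, hC]; ring
      _ = ∫⁻ x, C * (M 0 x) Set.univ ∂μ :=
          (lintegral_const_mul C (Kernel.measurable_coe (M 0) MeasurableSet.univ)).symm
      _ ≤ ∫⁻ x, ∫⁻ y, g y ∂(M 0 x) ∂μ := lintegral_mono fun x => key' x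
      _ = ∫⁻ x, g x ∂(seqApply M 0 1 μ) := by
          rw [hbind, Measure.lintegral_bind (M 0).measurable.aemeasurable hgmeas.aemeasurable]
  · calc ∫⁻ x, g x ∂(seqApply M 0 1 μ)
        ≤ ∫⁻ _, (⨆ y, g y) ∂(seqApply M 0 1 μ) := lintegral_mono fun x => hgsup x
      _ = (⨆ y, g y) * (seqApply M 0 1 μ) Set.univ := lintegral_const _
      _ = (seqApply M 0 1 μ) Set.univ * (⨆ y, g y) := mul_comm _ _
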